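/- arXiv:0706.0748 — 2 statements merged into one kernel-verified Lean document; each statement's English description precedes it below -/
import Mathlib

section
/- (Vanishing covariance of non-correlated paths) Fix N and s ≥ 1. For a closed path P = (i_0 → i_1 → ⋯ → i_{2s−1} → i_0) on the vertex set {1,…,N}, let X_P = ∏_{k=0}^{2s−1} a_{i_k i_{k+1}} (indices mod 2s). Suppose the entries {a_{ij}, 1 ≤ i ≤ j ≤ N} are independent, a_{ij} = a_{ji}, and E a_{ij} = 0. If two closed paths P_1 and P_2 of length 2s either (i) have no undirected edge in common, or (ii) some undirected edge of the union of P_1 and P_2 is traversed exactly once in total over both paths, then E[X_{P_1}·X_{P_2}] − E[X_{P_1}]·E[X_{P_2}] = 0. -/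
open MeasureTheory ProbabilityTheory Filter

/-- The cyclic successor of an index in `Fin L`. -/
def nextIdx {L : ℕ} (k : Fin L) : Fin L :=
  ⟨((k : ℕ) + 1) % L, Nat.mod_lt _ k.pos⟩

/-- For a closed path `p = (i_0 → i_1 → ⋯ → i_{L-1} → i_0)` on the vertex set
`Fin N`, the random variable `X_P = ∏_{k=0}^{L-1} a_{i_k i_{k+1}}`
(indices taken cyclically). -/
noncomputable def pathX {Ω : Type*} {N L : ℕ} (a : Fin N → Fin N → Ω → ℝ)
    (p : Fin L → Fin N) (ω : Ω) : ℝ :=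
  ∏ k : Fin L, a (p k) (p (nextIdx k)) ω

/-- The multiset of undirected edges (counted with multiplicity) of a closed
path `p` of length `L` on the vertex set `Fin N`. -/
def pathEdges {N L : ℕ} (p : Fin L → Fin N) : Multiset (Sym2 (Fin N)) :=
  Finset.univ.val.map (fun k : Fin L => Sym2.mk (p k) (p (nextIdx k)))


section Sym2Rep
variable {α : Type*} [LinearOrder α]

/-- canonical ordered representative of an unordered pair -/
def sym2Rep (e : Sym2 α) : {q : α × α // q.1 ≤ q.2} :=
  Sym2.lift ⟨fun i j => if h : i ≤ j then ⟨(i, j), h⟩ else ⟨(j, i), le_of_not_ge h⟩, by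
    intro i j
    by_cases h1 : i ≤ j <;> by_cases h2 : j ≤ i
    · have : i = j := le_antisymm h1 h2
      subst this; simp
    · simp [h1, h2]
    · simp [h1, h2]
    · exact absurd (le_total i j) (by simp [h1, h2])⟩ e

lemma sym2Rep_mk (i j : α) :
    sym2Rep (Sym2.mk i j) =
      if h : i ≤ j then ⟨(i, j), h⟩ else ⟨(j, i), le_of_not_ge h⟩ := rfl

lemma sym2Rep_section (e : Sym2 α) : Sym2.mk (sym2Rep e).1.1 (sym2Rep e).1.2 = e := by
  induction e using Sym2.ind with
  | _ i j =>
    rw [sym2Rep_mk]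
    split <;> simp [Sym2.eq_swap]

lemma sym2Rep_injective : Function.Injective (sym2Rep (α := α)) := fun e₁ e₂ h => by
  rw [← sym2Rep_section e₁, ← sym2Rep_section e₂, h]

end Sym2Rep

section IndepHelpers
variable {Ω : Type*} [MeasurableSpace Ω] {μ : Measure Ω} [IsProbabilityMeasure μ]
  {ι : Type*} [DecidableEq ι]

lemma indepFun_prod_prod_of_disjoint (f : ι → Ω → ℝ)
    (hindep : iIndepFun f μ)
    (hmeas : ∀ i, Measurable (f i))
    {κ₁ κ₂ : Type*} (A : Finset κ₁) (B : Finset κ₂) (g₁ : κ₁ → ι) (g₂ : κ₂ → ι)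
    (hdisj : Disjoint (A.image g₁) (B.image g₂)) :
    IndepFun (fun ω => ∏ k ∈ A, f (g₁ k) ω) (fun ω => ∏ k ∈ B, f (g₂ k) ω) μ := by
  classical
  have h := hindep.indepFun_finset (A.image g₁) (B.image g₂) hdisj hmeas
  have hφ : Measurable (fun x : ((A.image g₁ : Finset ι) : Type _) → ℝ =>
      ∏ k ∈ A.attach, x ⟨g₁ k, Finset.mem_image_of_mem g₁ k.2⟩) :=
    Finset.measurable_prod _ (fun k _ => measurable_pi_apply _)
  have hψ : Measurable (fun x : ((B.image g₂ : Finset ι) : Type _) → ℝ =>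
      ∏ k ∈ B.attach, x ⟨g₂ k, Finset.mem_image_of_mem g₂ k.2⟩) :=
    Finset.measurable_prod _ (fun k _ => measurable_pi_apply _)
  have := h.comp hφ hψ
  convert this using 1
  · funext ω
    simp only [Function.comp]
    rw [← Finset.prod_attach A (fun k => f (g₁ k) ω)]
  · funext ω
    simp only [Function.comp]
    rw [← Finset.prod_attach B (fun k => f (g₂ k) ω)]

lemma integral_prod_single_occurrence (f : ι → Ω → ℝ)
    (hindep : iIndepFun f μ)
    (hmeas : ∀ i, Measurable (f i))
    {κ : Type*} (K : Finset κ) (g : κ → ι) (k0 : κ) (hk0 : k0 ∈ K)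
    (huniq : ∀ k ∈ K, g k = g k0 → k = k0)
    (hzero : ∫ ω, f (g k0) ω ∂μ = 0) :
    ∫ ω, ∏ k ∈ K, f (g k) ω ∂μ = 0 := by
  classical
  have hdisj : Disjoint (({k0} : Finset κ).image g) ((K.erase k0).image g) := by
    simp only [Finset.disjoint_left, Finset.mem_image, Finset.mem_singleton]
    rintro x ⟨k, rfl, rfl⟩ ⟨k', hk', he⟩
    exact (Finset.ne_of_mem_erase hk') (huniq k' (Finset.mem_of_mem_erase hk') he)
  have hind := indepFun_prod_prod_of_disjoint f hindep hmeas {k0} (K.erase k0) g g hdisj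
  have hm1 : AEStronglyMeasurable (fun ω => ∏ k ∈ ({k0} : Finset κ), f (g k) ω) μ :=
    (Finset.measurable_prod _ (fun k _ => hmeas _)).aestronglyMeasurable
  have hm2 : AEStronglyMeasurable (fun ω => ∏ k ∈ K.erase k0, f (g k) ω) μ :=
    (Finset.measurable_prod _ (fun k _ => hmeas _)).aestronglyMeasurable
  calc ∫ ω, ∏ k ∈ K, f (g k) ω ∂μ
      = ∫ ω, (∏ k ∈ ({k0} : Finset κ), f (g k) ω) * ∏ k ∈ K.erase k0, f (g k) ω ∂μ := by
        congr 1; funext ω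
        rw [Finset.prod_singleton]; exact (Finset.mul_prod_erase K (fun k => f (g k) ω) hk0).symm
    _ = (∫ ω, ∏ k ∈ ({k0} : Finset κ), f (g k) ω ∂μ) *
          ∫ ω, ∏ k ∈ K.erase k0, f (g k) ω ∂μ := IndepFun.integral_fun_mul_eq_mul_integral hind hm1 hm2
    _ = 0 := by
        simp only [Finset.prod_singleton]
        rw [hzero, zero_mul]

end IndepHelpers

lemma count_pathEdges {N L : ℕ} (p : Fin L → Fin N) (e : Sym2 (Fin N)) :
    (pathEdges p).count e =
      (Finset.univ.filter
        (fun k : Fin L => sym2Rep (Sym2.mk (p k) (p (nextIdx k))) = sym2Rep e)).card := by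
  classical
  have hcard : (Finset.univ.filter
        (fun k : Fin L => sym2Rep (Sym2.mk (p k) (p (nextIdx k))) = sym2Rep e)).card
      = Multiset.card (Multiset.filter
          (fun k : Fin L => sym2Rep (Sym2.mk (p k) (p (nextIdx k))) = sym2Rep e)
          Finset.univ.val) := by
    rw [Finset.card, Finset.filter_val]
  rw [pathEdges, Multiset.count_map, hcard]
  congr 1
  apply Multiset.filter_congr
  intro k _
  constructor
  · intro h; rw [h]
  · intro h; exact (sym2Rep_injective h).symm

lemma mem_pathEdges {N L : ℕ} (p : Fin L → Fin N) (e : Sym2 (Fin N)) :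
    e ∈ pathEdges p ↔ ∃ k : Fin L, Sym2.mk (p k) (p (nextIdx k)) = e := by
  rw [pathEdges, Multiset.mem_map]
  simp

theorem covariance_of_uncorrelated_paths_vanishes
    {Ω : Type*} [MeasurableSpace Ω] (μ : Measure Ω) [IsProbabilityMeasure μ]
    (N s : ℕ) (hs : 1 ≤ s)
    (a : Fin N → Fin N → Ω → ℝ) (C : ℝ)
    (hmeas : ∀ i j, Measurable (a i j))
    (hsymm : ∀ i j, a i j = a j i)
    (hindep : iIndepFun
      (fun q : {q : Fin N × Fin N // q.1 ≤ q.2} => a q.1.1 q.1.2) μ)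
    (hmean : ∀ i j, ∫ ω, a i j ω ∂μ = 0)
    (hbdd : ∀ i j, ∀ᵐ ω ∂μ, |a i j ω| ≤ C)
    (p₁ p₂ : Fin (2 * s) → Fin N)
    (h : (∀ e, e ∈ pathEdges p₁ → e ∉ pathEdges p₂) ∨
      (∃ e, (pathEdges p₁ + pathEdges p₂).count e = 1)) :
    (∫ ω, pathX a p₁ ω * pathX a p₂ ω ∂μ) -
      (∫ ω, pathX a p₁ ω ∂μ) * (∫ ω, pathX a p₂ ω ∂μ) = 0 := by
  classical
  set f : {q : Fin N × Fin N // q.1 ≤ q.2} → Ω → ℝ := fun q => a q.1.1 q.1.2 with hf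
  have fmeas : ∀ q, Measurable (f q) := fun q => hmeas _ _
  have key : ∀ i j : Fin N, f (sym2Rep (Sym2.mk i j)) = a i j := by
    intro i j
    rw [sym2Rep_mk]
    split
    · rfl
    · exact (hsymm i j).symm
  set idx : (Fin (2 * s) → Fin N) → Fin (2 * s) → {q : Fin N × Fin N // q.1 ≤ q.2} :=
    fun p k => sym2Rep (Sym2.mk (p k) (p (nextIdx k))) with hidx
  have pathX_eq : ∀ p : Fin (2 * s) → Fin N, pathX a p = fun ω => ∏ k, f (idx p k) ω := by
    intro p; funext ω
    unfold pathX
    refine Finset.prod_congr rfl fun k _ => ?_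
    rw [hidx, key]
  rcases h with hd | ⟨e, he⟩
  · have hdisj : Disjoint ((Finset.univ : Finset (Fin (2 * s))).image (idx p₁))
        ((Finset.univ : Finset (Fin (2 * s))).image (idx p₂)) := by
      simp only [Finset.disjoint_left, Finset.mem_image]
      rintro x ⟨k, -, rfl⟩ ⟨k', -, hq⟩
      have hedge : Sym2.mk (p₂ k') (p₂ (nextIdx k')) = Sym2.mk (p₁ k) (p₁ (nextIdx k)) :=
        sym2Rep_injective hq
      exact hd _ ((mem_pathEdges p₁ _).2 ⟨k, rfl⟩) ((mem_pathEdges p₂ _).2 ⟨k', hedge⟩)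
    have hind := indepFun_prod_prod_of_disjoint f hindep fmeas Finset.univ Finset.univ
      (idx p₁) (idx p₂) hdisj
    rw [pathX_eq p₁, pathX_eq p₂,
      IndepFun.integral_fun_mul_eq_mul_integral hind ((Finset.measurable_prod _ fun k _ => fmeas _).aestronglyMeasurable)
        ((Finset.measurable_prod _ fun k _ => fmeas _).aestronglyMeasurable), sub_self]
  · rw [Multiset.count_add] at he
    have claim : ∀ q r : Fin (2 * s) → Fin N,
        (pathEdges q).count e = 1 → (pathEdges r).count e = 0 →
        (∫ ω, pathX a q ω * pathX a r ω ∂μ) = 0 ∧ (∫ ω, pathX a q ω ∂μ) = 0 := by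
      intro q r h1 h0
      rw [count_pathEdges] at h1 h0
      obtain ⟨k0, hk0⟩ := Finset.card_eq_one.1 h1
      have hk0mem : idx q k0 = sym2Rep e := by
        have hmem : k0 ∈ Finset.univ.filter
            (fun k : Fin (2 * s) => sym2Rep (Sym2.mk (q k) (q (nextIdx k))) = sym2Rep e) :=
          hk0 ▸ Finset.mem_singleton_self k0
        exact (Finset.mem_filter.1 hmem).2
      have huniq1 : ∀ k : Fin (2 * s), idx q k = sym2Rep e → k = k0 := by
        intro k hk
        have hmem : k ∈ ({k0} : Finset (Fin (2 * s))) :=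
          hk0 ▸ Finset.mem_filter.2 ⟨Finset.mem_univ _, hk⟩
        exact Finset.mem_singleton.1 hmem
      have hnone : ∀ k : Fin (2 * s), idx r k ≠ sym2Rep e := by
        intro k hk
        have hmem : k ∈ Finset.univ.filter
            (fun k : Fin (2 * s) => sym2Rep (Sym2.mk (r k) (r (nextIdx k))) = sym2Rep e) :=
          Finset.mem_filter.2 ⟨Finset.mem_univ _, hk⟩
        rw [Finset.card_eq_zero.1 h0] at hmem
        exact absurd hmem (Finset.notMem_empty k)
      have hzero : ∫ ω, f (sym2Rep e) ω ∂μ = 0 := hmean _ _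
      constructor
      · have heq : (fun ω => pathX a q ω * pathX a r ω)
            = fun ω => ∏ k : Fin (2 * s) ⊕ Fin (2 * s),
                f (Sum.elim (idx q) (idx r) k) ω := by
          funext ω
          rw [Fintype.prod_sum_type, pathX_eq q, pathX_eq r]
          simp only [Sum.elim_inl, Sum.elim_inr]
        rw [show (∫ ω, pathX a q ω * pathX a r ω ∂μ)
            = ∫ ω, ∏ k : Fin (2 * s) ⊕ Fin (2 * s), f (Sum.elim (idx q) (idx r) k) ω ∂μ from by
          rw [← heq]]
        refine integral_prod_single_occurrence f hindep fmeas Finset.univ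
          (Sum.elim (idx q) (idx r)) (Sum.inl k0) (Finset.mem_univ _) ?_ ?_
        · rintro (k | k) - hgk
          · simp only [Sum.elim_inl] at hgk
            rw [huniq1 k (hgk.trans hk0mem)]
          · simp only [Sum.elim_inl, Sum.elim_inr] at hgk
            exact absurd (hgk.trans hk0mem) (hnone k)
        · simp only [Sum.elim_inl]
          rw [hk0mem]; exact hzero
      · rw [pathX_eq q]
        refine integral_prod_single_occurrence f hindep fmeas Finset.univ
          (idx q) k0 (Finset.mem_univ _) ?_ ?_
        · intro k _ hk
          exact huniq1 k (hk.trans hk0mem)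
        · rw [hk0mem]; exact hzero
    rcases Nat.add_eq_one_iff.1 he with ⟨h0, h1⟩ | ⟨h1, h0⟩
    on_goal 2 => obtain ⟨hprod, hint⟩ := claim p₁ p₂ h1 h0
    on_goal 2 => rw [hprod, hint, zero_mul, sub_zero]
    · obtain ⟨hprod, hint⟩ := claim p₂ p₁ h1 h0
      have hprod' : ∫ ω, pathX a p₁ ω * pathX a p₂ ω ∂μ = 0 := by
        rw [← hprod]
        congr 1; funext ω; ring
      rw [hprod', hint, mul_zero, sub_zero]
end

section
/- (Variance as a sum over correlated paths) Fix N and s ≥ 1, and for a closed path P = (i_0 → ⋯ → i_{2s−1} → i_0) on {1,…,N} let X_P = ∏_{k=0}^{2s−1} a_{i_k i_{k+1}}. Then Var(Tr A_N^{2s}) = N^{−2s} · Σ*_{P_1,P_2} ( E[X_{P_1} X_{P_2}] − E[X_{P_1}]·E[X_{P_2}] ), where the starred sum runs exactly over the pairs of closed paths P_1, P_2 of length 2s such that (i) P_1 and P_2 have at least one undirected edge in common and (ii) every undirected edge of the union of P_1 and P_2 is traversed at least twice in total. -/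
open MeasureTheory ProbabilityTheory Filter

/-- Two closed paths are *correlated* if (i) they have at least one undirected
edge in common, and (ii) every undirected edge of their union is traversed at
least twice in total over both paths. -/
def Correlated {N L : ℕ} (p₁ p₂ : Fin L → Fin N) : Prop :=
  (∃ e, e ∈ pathEdges p₁ ∧ e ∈ pathEdges p₂) ∧
    (∀ e, e ∈ pathEdges p₁ + pathEdges p₂ →
      2 ≤ (pathEdges p₁ + pathEdges p₂).count e)

lemma iIndepFun_equiv_comp {Ω ι ι' β : Type*} [MeasurableSpace Ω] {μ : Measure Ω}
    [MeasurableSpace β] {f : ι → Ω → β} (σ : ι' ≃ ι)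
    (h : iIndepFun f μ) :
    iIndepFun (fun i => f (σ i)) μ := by
  classical
  rw [iIndepFun_iff_measure_inter_preimage_eq_mul] at h ⊢
  intro S sets hsets
  have h2 := h (S.image σ) (sets := fun i => sets (σ.symm i))
    (by
      intro i hi
      obtain ⟨i', hi', rfl⟩ := Finset.mem_image.mp hi
      simpa using hsets i' hi')
  calc μ (⋂ i ∈ S, f (σ i) ⁻¹' sets i)
      = μ (⋂ i ∈ S.image σ, f i ⁻¹' sets (σ.symm i)) := by
        congr 1
        ext ω
        simp only [Set.mem_iInter, Finset.mem_image]
        constructor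
        · rintro hω i ⟨i', hi', rfl⟩
          simpa using hω i' hi'
        · intro hω i' hi'
          simpa using hω (σ i') ⟨i', hi', rfl⟩
    _ = ∏ i ∈ S.image σ, μ (f i ⁻¹' sets (σ.symm i)) := h2
    _ = ∏ i ∈ S, μ (f (σ i) ⁻¹' sets i) := by
        rw [Finset.prod_image (fun x _ y _ hxy => σ.injective hxy)]
        simp

lemma integrable_and_integral_prod {Ω ι : Type*} [MeasurableSpace Ω] (μ : Measure Ω)
    [IsProbabilityMeasure μ] (g : ι → Ω → ℝ)
    (hind : iIndepFun g μ)
    (hmeas : ∀ i, Measurable (g i)) (hint : ∀ i, Integrable (g i) μ)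
    (s : Finset ι) :
    Integrable (fun ω => ∏ i ∈ s, g i ω) μ ∧
      ∫ ω, ∏ i ∈ s, g i ω ∂μ = ∏ i ∈ s, ∫ ω, g i ω ∂μ := by
  classical
  induction s using Finset.cons_induction with
  | empty => simp
  | cons i s hi ih =>
    have hprodfn : (∏ j ∈ s, g j) = fun ω => ∏ j ∈ s, g j ω := by
      funext ω; rw [Finset.prod_apply]
    have hIndep : IndepFun (g i) (fun ω => ∏ j ∈ s, g j ω) μ := by
      have h1 := (hind.indepFun_finsetProd_of_notMem hmeas hi).symm
      rwa [hprodfn] at h1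
    have hintp : Integrable (fun ω => g i ω * ∏ j ∈ s, g j ω) μ :=
      hIndep.integrable_mul (hint i) ih.1
    constructor
    · simpa only [Finset.prod_cons] using hintp
    · simp only [Finset.prod_cons]
      rw [← ih.2]
      exact hIndep.integral_mul_eq_mul_integral (hint i).1 ih.1.1

lemma matrix_pow_entry {N : ℕ} (M : Matrix (Fin N) (Fin N) ℝ) :
    ∀ (L : ℕ) (i j : Fin N), (M ^ L) i j =
      ∑ p : Fin (L + 1) → Fin N,
        if p 0 = i ∧ p (Fin.last L) = j then
          ∏ k : Fin L, M (p k.castSucc) (p k.succ) else 0 := by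
  intro L
  induction L with
  | zero =>
    intro i j
    rw [pow_zero]
    rw [Fintype.sum_equiv (Equiv.funUnique (Fin 1) (Fin N)) _
      (fun x : Fin N => if x = i ∧ x = j then (1 : ℝ) else 0)
      (fun p => by simp [Equiv.funUnique, Fin.last])]
    simp only [ite_and]
    rw [Finset.sum_ite_eq' Finset.univ i (fun x => if x = j then (1:ℝ) else 0)]
    simp [Matrix.one_apply]
  | succ L ih =>
    intro i j
    rw [pow_succ', Matrix.mul_apply]
    rw [← Fintype.sum_equiv (Fin.consEquiv (fun _ : Fin (L + 2) => Fin N)) _ _ (fun xt => rfl)]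
    rw [Fintype.sum_prod_type]
    have hlast : ∀ (x : Fin N) (t : Fin (L + 1) → Fin N),
        (Fin.cons x t : Fin (L + 2) → Fin N) (Fin.last (L + 1)) = t (Fin.last L) := by
      intro x t
      rw [← Fin.succ_last, Fin.cons_succ]
    have hprod : ∀ (x : Fin N) (t : Fin (L + 1) → Fin N),
        (∏ k : Fin (L + 1), M ((Fin.cons x t : Fin (L + 2) → Fin N) k.castSucc)
            ((Fin.cons x t : Fin (L + 2) → Fin N) k.succ)) =
          M x (t 0) * ∏ k : Fin L, M (t k.castSucc) (t k.succ) := by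
      intro x t
      simp only [Fin.prod_univ_succ, Fin.castSucc_zero, Fin.cons_zero, Fin.cons_succ,
        ← Fin.succ_castSucc]
    calc ∑ x, M i x * (M ^ L) x j
        = ∑ x, ∑ t : Fin (L + 1) → Fin N,
            (if t 0 = x ∧ t (Fin.last L) = j then
              M i x * ∏ k : Fin L, M (t k.castSucc) (t k.succ) else 0) := by
          refine Finset.sum_congr rfl fun x _ => ?_
          rw [ih x j, Finset.mul_sum]
          refine Finset.sum_congr rfl fun t _ => ?_
          rw [mul_ite, mul_zero]
      _ = ∑ t : Fin (L + 1) → Fin N, ∑ x,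
            (if t 0 = x ∧ t (Fin.last L) = j then
              M i x * ∏ k : Fin L, M (t k.castSucc) (t k.succ) else 0) := Finset.sum_comm
      _ = ∑ t : Fin (L + 1) → Fin N,
            (if t (Fin.last L) = j then
              M i (t 0) * ∏ k : Fin L, M (t k.castSucc) (t k.succ) else 0) := by
          refine Finset.sum_congr rfl fun t _ => ?_
          simp only [ite_and]
          rw [Finset.sum_ite_eq Finset.univ (t 0)
            (fun x => if t (Fin.last L) = j then M i x * ∏ k : Fin L, M (t k.castSucc) (t k.succ) else 0)]
          simp
      _ = ∑ x, ∑ t : Fin (L + 1) → Fin N,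
            (if x = i ∧ t (Fin.last L) = j then
              M x (t 0) * ∏ k : Fin L, M (t k.castSucc) (t k.succ) else 0) := by
          rw [Finset.sum_comm]
          refine Finset.sum_congr rfl fun t _ => ?_
          simp only [ite_and]
          rw [Finset.sum_ite_eq' Finset.univ i
            (fun x => if t (Fin.last L) = j then M x (t 0) * ∏ k : Fin L, M (t k.castSucc) (t k.succ) else 0)]
          simp
      _ = ∑ x, ∑ t : Fin (L + 1) → Fin N,
            (if (Fin.cons x t : Fin (L + 2) → Fin N) 0 = i ∧
                (Fin.cons x t : Fin (L + 2) → Fin N) (Fin.last (L + 1)) = j then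
              ∏ k : Fin (L + 1), M ((Fin.cons x t : Fin (L + 2) → Fin N) k.castSucc)
                ((Fin.cons x t : Fin (L + 2) → Fin N) k.succ) else 0) := by
          refine Finset.sum_congr rfl fun x _ => Finset.sum_congr rfl fun t _ => ?_
          rw [Fin.cons_zero, hlast, hprod]

lemma trace_pow_eq {N L : ℕ} (hL : 0 < L) (M : Matrix (Fin N) (Fin N) ℝ) :
    (M ^ L).trace = ∑ p : Fin L → Fin N, ∏ k : Fin L, M (p k) (p (nextIdx k)) := by
  obtain ⟨L, rfl⟩ : ∃ L', L = L' + 1 := ⟨L - 1, (Nat.succ_pred_eq_of_pos hL).symm⟩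
  rw [Matrix.trace]
  have h1 : ∀ i, (M ^ (L + 1)).diag i = ∑ p : Fin (L + 2) → Fin N,
      if p 0 = i ∧ p (Fin.last (L + 1)) = i then
        ∏ k : Fin (L + 1), M (p k.castSucc) (p k.succ) else 0 := by
    intro i; exact matrix_pow_entry M (L + 1) i i
  rw [Finset.sum_congr rfl (fun i _ => h1 i), Finset.sum_comm]
  have h2 : ∀ p : Fin (L + 2) → Fin N,
      (∑ i, if p 0 = i ∧ p (Fin.last (L + 1)) = i then
        ∏ k : Fin (L + 1), M (p k.castSucc) (p k.succ) else 0) =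
      (if p (Fin.last (L + 1)) = p 0 then
        ∏ k : Fin (L + 1), M (p k.castSucc) (p k.succ) else 0) := by
    intro p
    simp only [ite_and]
    rw [Finset.sum_ite_eq Finset.univ (p 0)
      (fun i => if p (Fin.last (L + 1)) = i then ∏ k : Fin (L + 1), M (p k.castSucc) (p k.succ) else 0)]
    simp
  rw [Finset.sum_congr rfl (fun p _ => h2 p), ← Finset.sum_filter]
  refine Finset.sum_nbij' (fun p => p ∘ Fin.castSucc)
    (fun q => fun m : Fin (L + 2) => q ⟨(m : ℕ) % (L + 1), Nat.mod_lt _ (Nat.succ_pos L)⟩)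
    (fun p _ => Finset.mem_univ _) ?_ ?_ ?_ ?_
  · intro q _
    simp only [Finset.mem_filter, Finset.mem_univ, true_and]
    exact congrArg q (by ext; simp [Fin.last])
  · intro p hp
    simp only [Finset.mem_filter, Finset.mem_univ, true_and] at hp
    funext m
    dsimp only [Function.comp_apply]
    rcases Nat.lt_or_ge (m : ℕ) (L + 1) with hm | hm
    · exact congrArg p (by ext; simp [Nat.mod_eq_of_lt hm])
    · have hm' : (m : ℕ) = L + 1 := le_antisymm (Nat.lt_succ_iff.mp m.isLt) hm
      have e1 : Fin.castSucc (⟨(m : ℕ) % (L + 1), Nat.mod_lt _ (Nat.succ_pos L)⟩ : Fin (L + 1)) =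
          (0 : Fin (L + 2)) := by ext; simp [hm']
      have e2 : m = Fin.last (L + 1) := Fin.ext hm'
      rw [e1, e2]
      exact hp.symm
  · intro q _
    funext k
    dsimp only [Function.comp_apply]
    exact congrArg q (by ext; simp [Nat.mod_eq_of_lt (Nat.lt_succ_of_lt k.isLt), Nat.le_of_lt_succ k.isLt])
  · intro p hp
    simp only [Finset.mem_filter, Finset.mem_univ, true_and] at hp
    refine Finset.prod_congr rfl fun k _ => ?_
    simp only [Function.comp_apply]
    congr 1
    rcases Nat.lt_or_ge ((k : ℕ) + 1) (L + 1) with hk | hk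
    · congr 1
      ext
      simp [nextIdx, Nat.mod_eq_of_lt hk]
    · have hk' : (k : ℕ) = L := le_antisymm (Nat.lt_succ_iff.mp k.isLt) (Nat.le_of_succ_le_succ hk)
      have h0 : nextIdx k = ⟨0, Nat.succ_pos L⟩ := by
        ext; simp [nextIdx, hk']
      have e1 : (⟨0, Nat.succ_pos L⟩ : Fin (L + 1)).castSucc = (0 : Fin (L + 2)) := by
        ext; simp
      have e2 : k.succ = Fin.last (L + 1) := by ext; simp [hk', Fin.last]
      rw [h0, e1, e2]
      exact hp

open Classical in
theorem variance_eq_sum_over_correlated_paths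
    {Ω : Type*} [MeasurableSpace Ω] (μ : Measure Ω) [IsProbabilityMeasure μ]
    (N s : ℕ) (hs : 1 ≤ s)
    (a : Fin N → Fin N → Ω → ℝ) (C : ℝ)
    (hmeas : ∀ i j, Measurable (a i j))
    (hsymm : ∀ i j, a i j = a j i)
    (hindep : iIndepFun
      (fun q : {q : Fin N × Fin N // q.1 ≤ q.2} => a q.1.1 q.1.2) μ)
    (hmean : ∀ i j, ∫ ω, a i j ω ∂μ = 0)
    (hbdd : ∀ i j, ∀ᵐ ω ∂μ, |a i j ω| ≤ C)
    (A : Ω → Matrix (Fin N) (Fin N) ℝ)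
    (hA : ∀ ω i j, A ω i j = a i j ω / Real.sqrt N) :
    (∫ ω, (Matrix.trace ((A ω) ^ (2 * s))) ^ 2 ∂μ) -
        (∫ ω, Matrix.trace ((A ω) ^ (2 * s)) ∂μ) ^ 2 =
      (1 / (N : ℝ) ^ (2 * s)) *
        ∑ p₁ : Fin (2 * s) → Fin N, ∑ p₂ : Fin (2 * s) → Fin N,
          if Correlated p₁ p₂ then
            (∫ ω, pathX a p₁ ω * pathX a p₂ ω ∂μ) -
              (∫ ω, pathX a p₁ ω ∂μ) * (∫ ω, pathX a p₂ ω ∂μ)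
          else 0 := by
  classical
  set L := 2 * s with hLdef
  have hLpos : 0 < L := by omega
  -- canonical edge variables
  set b : Sym2 (Fin N) → Ω → ℝ :=
    fun e => a (Sym2.sortEquiv e).1.1 (Sym2.sortEquiv e).1.2 with hbdef
  have hb_mk : ∀ i j, b s(i, j) = a i j := by
    intro i j
    have hb0 : b s(i, j) = a (i ⊓ j) (i ⊔ j) := rfl
    rcases le_total i j with h | h
    · rw [hb0, inf_eq_left.mpr h, sup_eq_right.mpr h]
    · rw [hb0, inf_eq_right.mpr h, sup_eq_left.mpr h, ← hsymm]
  have hb_meas : ∀ e, Measurable (b e) := fun e => hmeas _ _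
  have hb_indep : iIndepFun b μ :=
    iIndepFun_equiv_comp Sym2.sortEquiv hindep
  have hb_mean : ∀ e, ∫ ω, b e ω ∂μ = 0 := fun e => hmean _ _
  have hb_int : ∀ e (m : ℕ), Integrable (fun ω => b e ω ^ m) μ := by
    intro e m
    refine (integrable_const ((max C 0) ^ m)).mono'
      ((hb_meas e).pow_const m).aestronglyMeasurable ?_
    filter_upwards [hbdd (Sym2.sortEquiv e).1.1 (Sym2.sortEquiv e).1.2] with ω hω
    rw [Real.norm_eq_abs, abs_pow]
    exact pow_le_pow_left₀ (abs_nonneg _) (hω.trans (le_max_left _ _)) m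
  -- key integral factorization
  have key : ∀ m : Sym2 (Fin N) → ℕ,
      Integrable (fun ω => ∏ e : Sym2 (Fin N), b e ω ^ m e) μ ∧
      ∫ ω, ∏ e : Sym2 (Fin N), b e ω ^ m e ∂μ =
        ∏ e : Sym2 (Fin N), ∫ ω, b e ω ^ m e ∂μ := by
    intro m
    exact integrable_and_integral_prod μ (fun e ω => b e ω ^ m e)
      (hb_indep.comp (fun e x => x ^ m e) (fun e => measurable_id.pow_const (m e)))
      (fun e => (hb_meas e).pow_const _) (fun e => hb_int e (m e)) Finset.univ
  -- rewrite pathX as a product over edges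
  have hXrw : ∀ (p : Fin L → Fin N),
      pathX a p = fun ω => ∏ e : Sym2 (Fin N), b e ω ^ (pathEdges p).count e := by
    intro p
    funext ω
    have h1 : pathX a p ω = ((pathEdges p).map (fun e => b e ω)).prod := by
      rw [pathEdges, Multiset.map_map]
      rw [show (pathX a p ω) = ∏ k : Fin L, b (Sym2.mk (p k) (p (nextIdx k))) ω from
        Finset.prod_congr rfl (fun k _ => (congrFun (hb_mk _ _) ω).symm)]
      exact Finset.prod_eq_multiset_prod Finset.univ _
    rw [h1, Finset.prod_multiset_map_count (pathEdges p) (fun e => b e ω)]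
    refine Finset.prod_subset (Finset.subset_univ _) ?_
    intro e _ he
    rw [Multiset.count_eq_zero_of_notMem (by simpa [Multiset.mem_toFinset] using he), pow_zero]
  have hXXrw : ∀ (p₁ p₂ : Fin L → Fin N) (ω : Ω),
      pathX a p₁ ω * pathX a p₂ ω =
        ∏ e : Sym2 (Fin N), b e ω ^ (pathEdges p₁ + pathEdges p₂).count e := by
    intro p₁ p₂ ω
    rw [hXrw p₁, hXrw p₂]
    rw [← Finset.prod_mul_distrib]
    exact Finset.prod_congr rfl fun e _ => by rw [Multiset.count_add, pow_add]
  -- integrability and integral formulas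
  have hX_int : ∀ p : Fin L → Fin N, Integrable (pathX a p) μ := by
    intro p; rw [hXrw p]; exact (key _).1
  have hXX_int : ∀ p₁ p₂ : Fin L → Fin N,
      Integrable (fun ω => pathX a p₁ ω * pathX a p₂ ω) μ := by
    intro p₁ p₂
    have : (fun ω => pathX a p₁ ω * pathX a p₂ ω) =
        fun ω => ∏ e : Sym2 (Fin N), b e ω ^ (pathEdges p₁ + pathEdges p₂).count e :=
      funext (hXXrw p₁ p₂)
    rw [this]; exact (key _).1
  have hEX : ∀ p : Fin L → Fin N, ∫ ω, pathX a p ω ∂μ =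
      ∏ e : Sym2 (Fin N), ∫ ω, b e ω ^ (pathEdges p).count e ∂μ := by
    intro p; rw [hXrw p]; exact (key _).2
  have hEXX : ∀ p₁ p₂ : Fin L → Fin N, ∫ ω, pathX a p₁ ω * pathX a p₂ ω ∂μ =
      ∏ e : Sym2 (Fin N), ∫ ω, b e ω ^ (pathEdges p₁ + pathEdges p₂).count e ∂μ := by
    intro p₁ p₂
    rw [show (fun ω => pathX a p₁ ω * pathX a p₂ ω) =
        fun ω => ∏ e : Sym2 (Fin N), b e ω ^ (pathEdges p₁ + pathEdges p₂).count e from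
      funext (hXXrw p₁ p₂)]
    exact (key _).2
  -- covariance vanishes for non-correlated pairs
  have hvanish : ∀ p₁ p₂ : Fin L → Fin N, ¬ Correlated p₁ p₂ →
      (∫ ω, pathX a p₁ ω * pathX a p₂ ω ∂μ) =
        (∫ ω, pathX a p₁ ω ∂μ) * (∫ ω, pathX a p₂ ω ∂μ) := by
    intro p₁ p₂ hnc
    rw [hEXX, hEX, hEX]
    rw [Correlated, not_and_or] at hnc
    rcases hnc with hnc | hnc
    · push_neg at hnc
      rw [← Finset.prod_mul_distrib]
      refine Finset.prod_congr rfl fun e _ => ?_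
      have hdisj : (pathEdges p₁).count e = 0 ∨ (pathEdges p₂).count e = 0 := by
        by_contra h
        push_neg at h
        exact hnc e (Multiset.count_pos.mp (Nat.pos_of_ne_zero h.1))
          (Multiset.count_pos.mp (Nat.pos_of_ne_zero h.2))
      rw [Multiset.count_add]
      rcases hdisj with h0 | h0 <;> rw [h0] <;> simp
    · push_neg at hnc
      obtain ⟨e, he, hlt⟩ := hnc
      have h1 : (pathEdges p₁ + pathEdges p₂).count e = 1 := by
        have := Multiset.one_le_count_iff_mem.mpr he
        omega
      have hz : ∫ ω, b e ω ^ (pathEdges p₁ + pathEdges p₂).count e ∂μ = 0 := by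
        rw [h1]; simp only [pow_one]; exact hb_mean e
      rw [Finset.prod_eq_zero (Finset.mem_univ e) hz]
      rw [Multiset.count_add] at h1
      have hfac : ∀ (p : Fin L → Fin N), (pathEdges p).count e = 1 →
          (∏ e' : Sym2 (Fin N), ∫ ω, b e' ω ^ (pathEdges p).count e' ∂μ) = 0 := by
        intro p hp
        refine Finset.prod_eq_zero (Finset.mem_univ e) ?_
        rw [hp]; simp only [pow_one]; exact hb_mean e
      rcases Nat.add_eq_one_iff.mp h1 with ⟨ha1, ha2⟩ | ⟨ha1, ha2⟩
      · exact (mul_eq_zero_of_right _ (hfac p₂ ha2)).symm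
      · exact (mul_eq_zero_of_left (hfac p₁ ha1) _).symm
  -- trace formula
  have hTrace : ∀ ω, Matrix.trace (A ω ^ L) =
      (∑ p : Fin L → Fin N, pathX a p ω) / (N : ℝ) ^ s := by
    intro ω
    rw [trace_pow_eq hLpos, Finset.sum_div]
    refine Finset.sum_congr rfl fun p _ => ?_
    unfold pathX
    simp only [hA]
    rw [Finset.prod_div_distrib, Finset.prod_const, Finset.card_univ, Fintype.card_fin]
    congr 1
    rw [hLdef, pow_mul, Real.sq_sqrt (Nat.cast_nonneg N)]
  have hET : ∫ ω, Matrix.trace (A ω ^ L) ∂μ =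
      (∑ p : Fin L → Fin N, ∫ ω, pathX a p ω ∂μ) / (N : ℝ) ^ s := by
    simp only [hTrace]
    rw [integral_div, integral_finset_sum _ (fun p _ => hX_int p)]
  have hET2 : ∫ ω, (Matrix.trace (A ω ^ L)) ^ 2 ∂μ =
      (∑ p₁ : Fin L → Fin N, ∑ p₂ : Fin L → Fin N,
        ∫ ω, pathX a p₁ ω * pathX a p₂ ω ∂μ) / ((N : ℝ) ^ s) ^ 2 := by
    simp only [hTrace, div_pow]
    rw [integral_div]
    congr 1
    have hsq : ∀ ω, (∑ p : Fin L → Fin N, pathX a p ω) ^ 2 =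
        ∑ p₁ : Fin L → Fin N, ∑ p₂ : Fin L → Fin N, pathX a p₁ ω * pathX a p₂ ω := by
      intro ω
      rw [sq, Finset.sum_mul_sum]
    simp only [hsq]
    rw [integral_finset_sum _ (fun p₁ _ =>
      integrable_finset_sum _ (fun p₂ _ => hXX_int p₁ p₂))]
    exact Finset.sum_congr rfl fun p₁ _ =>
      integral_finset_sum _ (fun p₂ _ => hXX_int p₁ p₂)
  -- assemble
  rw [hET, hET2]
  have hNL : ((N : ℝ) ^ s) ^ 2 = (N : ℝ) ^ L := by
    rw [hLdef, ← pow_mul, mul_comm]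
  rw [div_pow, hNL]
  rw [div_sub_div_same]
  have hsum2 : (∑ p : Fin L → Fin N, ∫ ω, pathX a p ω ∂μ) ^ 2 =
      ∑ p₁ : Fin L → Fin N, ∑ p₂ : Fin L → Fin N,
        (∫ ω, pathX a p₁ ω ∂μ) * (∫ ω, pathX a p₂ ω ∂μ) := by
    rw [sq, Finset.sum_mul_sum]
  rw [hsum2, ← Finset.sum_sub_distrib]
  have hfin : ∀ p₁ : Fin L → Fin N,
      (∑ p₂ : Fin L → Fin N, ∫ ω, pathX a p₁ ω * pathX a p₂ ω ∂μ) -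
        (∑ p₂ : Fin L → Fin N, (∫ ω, pathX a p₁ ω ∂μ) * (∫ ω, pathX a p₂ ω ∂μ)) =
      ∑ p₂ : Fin L → Fin N,
        if Correlated p₁ p₂ then
          (∫ ω, pathX a p₁ ω * pathX a p₂ ω ∂μ) -
            (∫ ω, pathX a p₁ ω ∂μ) * (∫ ω, pathX a p₂ ω ∂μ)
        else 0 := by
    intro p₁
    rw [← Finset.sum_sub_distrib]
    refine Finset.sum_congr rfl fun p₂ _ => ?_
    by_cases h : Correlated p₁ p₂
    · rw [if_pos h]
    · rw [if_neg h, hvanish p₁ p₂ h, sub_self]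
  rw [Finset.sum_congr rfl (fun p₁ _ => hfin p₁)]
  rw [div_eq_mul_inv, mul_comm, one_div]
end
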